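/- Let ℓ ≥ 2 be an integer, τ ≥ 1, Δ > 0, and let 0 = τ_1 < τ_2 < … < τ_ℓ ≤ τ be pairwise distinct reals. Set h_i := −τ_i·Δ, and let (A_1, …, A_ℓ, B_1, …, B_ℓ) be the unique solution of U_{2ℓ}(h)·(A; B)ᵀ = (0, …, 0, (2ℓ−1)!)ᵀ. Let z_1, …, z_ℓ ∈ ℂ with |z_j| = 1, and define u ∈ ℂ^{2ℓ} by u_j := Δ^{2ℓ−1}·A_j and u_{ℓ+j} := Δ^{2ℓ−1}·2πi·z_j·B_j for 1 ≤ j ≤ ℓ. Then ‖u‖₂ ≥ (2ℓ−1)! / (4·ℓ³·τ^{2ℓ−1}). -/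

import Mathlib

open scoped BigOperators

/-- The square `2ℓ × 2ℓ` confluent Vandermonde matrix `U_{2ℓ}(h)`: rows `k = 0, …, 2ℓ-1`,
entry `h_j^k` in column `j` and `k h_j^{k-1}` in column `ℓ + j`. -/
noncomputable def U2l (ℓ : ℕ) (h : Fin ℓ → ℝ) : Matrix (Fin (2 * ℓ)) (Fin ℓ ⊕ Fin ℓ) ℂ :=
  fun k => Sum.elim (fun j => ((h j : ℂ)) ^ (k : ℕ))
    (fun j => ((k : ℕ) : ℂ) * ((h j : ℂ)) ^ ((k : ℕ) - 1))

/-- The right-hand side `(0, …, 0, (2ℓ-1)!)ᵀ` of the finite-difference linear system. -/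
noncomputable def fdRhs (ℓ : ℕ) : Fin (2 * ℓ) → ℂ :=
  fun k => if (k : ℕ) = 2 * ℓ - 1 then ((2 * ℓ - 1).factorial : ℂ) else 0

/-- The discrete ℓ² norm of a vector. -/
noncomputable def l2norm {n : Type*} [Fintype n] (v : n → ℂ) : ℝ :=
  Real.sqrt (∑ i, ‖v i‖ ^ 2)

open Polynomial in
lemma final_num (F x l3 : ℝ) (hF : 0 ≤ F) (hx : 0 < x) (hl : 1 ≤ l3) :
    F / (4 * l3 * x) ≤ 2 * F / x := by
  rw [div_le_div_iff₀ (by positivity) (by positivity)]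
  nlinarith [mul_nonneg hF hx.le]


open Polynomial in
lemma key_functional (ℓ : ℕ) (hℓ : 2 ≤ ℓ) (hr : Fin ℓ → ℝ) (A B : Fin ℓ → ℂ)
    (hAB : (U2l ℓ hr).mulVec (Sum.elim A B) = fdRhs ℓ)
    (p : Polynomial ℂ) (hdeg : p.natDegree < 2 * ℓ) :
    ∑ j, A j * p.eval ((hr j : ℝ) : ℂ) +
      ∑ j, B j * (derivative p).eval ((hr j : ℝ) : ℂ)
      = p.coeff (2 * ℓ - 1) * ((2 * ℓ - 1).factorial : ℂ) := by
  have row : ∀ k : Fin (2 * ℓ),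
      (∑ j, ((hr j : ℂ)) ^ (k : ℕ) * A j
        + ∑ j, ((k : ℕ) : ℂ) * ((hr j : ℂ)) ^ ((k : ℕ) - 1) * B j) = fdRhs ℓ k := by
    intro k
    have := congrFun hAB k
    simpa [Matrix.mulVec, dotProduct, U2l, Fintype.sum_sum_type] using this
  -- eval formulas
  have hev : ∀ x : ℂ, p.eval x = ∑ k ∈ Finset.range (2 * ℓ), p.coeff k * x ^ k :=
    fun x => eval_eq_sum_range' hdeg x
  have hdev : ∀ x : ℂ, (derivative p).eval x
      = ∑ k ∈ Finset.range (2 * ℓ), p.coeff k * (((k : ℕ) : ℂ) * x ^ (k - 1)) := by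
    intro x
    have hd2 : (derivative p).natDegree < 2 * ℓ - 1 := by
      have h1 := natDegree_derivative_le p
      omega
    rw [eval_eq_sum_range' hd2 x]
    have h2 : 2 * ℓ = (2 * ℓ - 1) + 1 := by omega
    rw [h2, Finset.sum_range_succ']
    simp only [coeff_derivative]
    simp only [Nat.add_sub_cancel, Nat.cast_zero, zero_mul, mul_zero, add_zero]
    apply Finset.sum_congr rfl
    intro k _
    push_cast
    ring
  -- weighted sum of rows
  have main : ∑ k : Fin (2 * ℓ), p.coeff k *
      (∑ j, ((hr j : ℂ)) ^ (k : ℕ) * A j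
        + ∑ j, ((k : ℕ) : ℂ) * ((hr j : ℂ)) ^ ((k : ℕ) - 1) * B j)
      = ∑ k : Fin (2 * ℓ), p.coeff k * fdRhs ℓ k := by
    exact Finset.sum_congr rfl fun k _ => by rw [row k]
  have rhs : ∑ k : Fin (2 * ℓ), p.coeff k * fdRhs ℓ k
      = p.coeff (2 * ℓ - 1) * ((2 * ℓ - 1).factorial : ℂ) := by
    rw [Finset.sum_eq_single (⟨2 * ℓ - 1, by omega⟩ : Fin (2 * ℓ))]
    · simp [fdRhs]
    · intro k _ hk
      have : (k : ℕ) ≠ 2 * ℓ - 1 := by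
        intro h; exact hk (Fin.ext (by simpa using h))
      simp [fdRhs, this]
    · simp
  rw [rhs] at main
  rw [← main]
  -- now expand left side
  have lhs : ∑ k : Fin (2 * ℓ), p.coeff k *
      (∑ j, ((hr j : ℂ)) ^ (k : ℕ) * A j
        + ∑ j, ((k : ℕ) : ℂ) * ((hr j : ℂ)) ^ ((k : ℕ) - 1) * B j)
      = ∑ j, A j * p.eval ((hr j : ℝ) : ℂ)
        + ∑ j, B j * (derivative p).eval ((hr j : ℝ) : ℂ) := by
    simp only [mul_add, Finset.sum_add_distrib, Finset.mul_sum]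
    congr 1
    · rw [Finset.sum_comm]
      refine Finset.sum_congr rfl fun j _ => ?_
      rw [hev ((hr j : ℝ) : ℂ), Finset.mul_sum,
        ← Fin.sum_univ_eq_sum_range (fun k => A j * (p.coeff k * (((hr j : ℝ) : ℂ)) ^ k)) (2 * ℓ)]
      exact Finset.sum_congr rfl fun k _ => by ring
    · rw [Finset.sum_comm]
      refine Finset.sum_congr rfl fun j _ => ?_
      rw [hdev ((hr j : ℝ) : ℂ), Finset.mul_sum,
        ← Fin.sum_univ_eq_sum_range
          (fun k => B j * (p.coeff k * (((k : ℕ) : ℂ) * (((hr j : ℝ) : ℂ)) ^ (k - 1)))) (2 * ℓ)]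
      exact Finset.sum_congr rfl fun k _ => by ring
  rw [lhs]

open Polynomial in
/-- Lemma (lower bound for the candidate singular vector `u`): with `h_i = -τ_i Δ`,
`0 = τ_1 < … < τ_ℓ ≤ τ`, weights `(A; B)` solving `U_{2ℓ}(h)(A; B)ᵀ = (0, …, 0, (2ℓ-1)!)ᵀ`,
unimodular `z_j`, and `u_j = Δ^{2ℓ-1} A_j`, `u_{ℓ+j} = Δ^{2ℓ-1} 2πi z_j B_j`, one has
`‖u‖₂ ≥ (2ℓ-1)! / (4 ℓ³ τ^{2ℓ-1})`. -/
theorem fd_vector_norm_lower_bound (ℓ : ℕ) (hℓ : 2 ≤ ℓ) (τ Δ : ℝ) (hτ : 1 ≤ τ) (hΔ : 0 < Δ)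
    (t : Fin ℓ → ℝ) (ht0 : t ⟨0, by omega⟩ = 0) (hmono : StrictMono t) (htτ : ∀ i, t i ≤ τ)
    (z : Fin ℓ → ℂ) (hz : ∀ j, ‖z j‖ = 1)
    (A B : Fin ℓ → ℂ)
    (hAB : (U2l ℓ (fun i => -(t i) * Δ)).mulVec (Sum.elim A B) = fdRhs ℓ) :
    ((2 * ℓ - 1).factorial : ℝ) / (4 * (ℓ : ℝ) ^ 3 * τ ^ (2 * ℓ - 1)) ≤
      l2norm (Sum.elim
        (fun j : Fin ℓ => ((Δ : ℝ) : ℂ) ^ (2 * ℓ - 1) * A j)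
        (fun j : Fin ℓ => ((Δ : ℝ) : ℂ) ^ (2 * ℓ - 1) *
          (2 * (Real.pi : ℂ) * Complex.I) * z j * B j)) := by
  set hr : Fin ℓ → ℝ := fun i => -(t i) * Δ with hhr
  set i0 : Fin ℓ := ⟨0, by omega⟩ with hi0
  set i1 : Fin ℓ := ⟨1, by omega⟩ with hi1
  set s : Finset (Fin ℓ) := Finset.univ.erase i0 with hs
  -- positivity of the nodes
  have htpos : ∀ j ∈ s, 0 < t j := by
    intro j hj
    have hj0 : j ≠ i0 := (Finset.mem_erase.mp hj).1
    have : i0 < j := by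
      rw [Fin.lt_def]
      have : (j : ℕ) ≠ 0 := fun h => hj0 (Fin.ext (by simpa using h))
      simpa [hi0] using Nat.pos_of_ne_zero this
    have := hmono this
    rwa [ht0] at this
  have hrpos : ∀ j ∈ s, 0 < t j * Δ := fun j hj => mul_pos (htpos j hj) hΔ
  have hi1s : i1 ∈ s := by
    refine Finset.mem_erase.mpr ⟨?_, Finset.mem_univ _⟩
    intro h
    simpa [hi1, hi0] using congrArg Fin.val h
  -- the polynomial data
  set Q0 : ℝ := ∏ j ∈ s, (t j * Δ) with hQ0
  set S : ℝ := ∑ i ∈ s, ∏ j ∈ s.erase i, (t j * Δ) with hS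
  have hQ0pos : 0 < Q0 := Finset.prod_pos hrpos
  have hTpos : (0:ℝ) < ∏ j ∈ s.erase i1, (t j * Δ) :=
    Finset.prod_pos fun j hj => hrpos j (Finset.mem_of_mem_erase hj)
  have hSpos : 0 < S := by
    refine Finset.sum_pos (fun i hi => Finset.prod_pos fun j hj => hrpos j (Finset.mem_of_mem_erase hj)) ⟨i1, hi1s⟩
  set c : ℝ := Q0 / (2 * S) with hc
  have hcpos : 0 < c := div_pos hQ0pos (by linarith)
  set Q : Polynomial ℂ := ∏ j ∈ s, (X - C ((hr j : ℝ) : ℂ)) with hQ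
  set p : Polynomial ℂ := (X - C ((c : ℝ) : ℂ)) * Q ^ 2 with hp
  -- node values
  have hri0 : hr i0 = 0 := by simp [hhr, ht0]
  have hcast : ∀ j ∈ s, (0 : ℂ) - ((hr j : ℝ) : ℂ) = ((t j * Δ : ℝ) : ℂ) := by
    intro j hj; rw [hhr]; push_cast; ring
  -- degree facts
  have hQmonic : Q.Monic := monic_prod_of_monic _ _ fun j _ => monic_X_sub_C _
  have hQdeg : Q.natDegree = ℓ - 1 := by
    rw [hQ, natDegree_prod_of_monic _ _ fun j _ => monic_X_sub_C _]
    simp [hs, Finset.card_erase_of_mem]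
  have hpmonic : p.Monic := (monic_X_sub_C _).mul (hQmonic.pow 2)
  have hpdeg : p.natDegree = 2 * ℓ - 1 := by
    rw [hp, (monic_X_sub_C _).natDegree_mul (hQmonic.pow 2), natDegree_X_sub_C,
      natDegree_pow, hQdeg]
    omega
  have hpcoeff : p.coeff (2 * ℓ - 1) = 1 := by
    have := hpmonic.coeff_natDegree
    rwa [hpdeg] at this
  -- evaluations
  have hQeval : ∀ j ∈ s, Q.eval ((hr j : ℝ) : ℂ) = 0 := by
    intro j hj
    rw [hQ, eval_prod]
    exact Finset.prod_eq_zero hj (by simp)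
  have hQ0eval : Q.eval 0 = ((Q0 : ℝ) : ℂ) := by
    rw [hQ, eval_prod, hQ0]
    push_cast
    refine Finset.prod_congr rfl fun j hj => ?_
    simpa using hcast j hj
  have hQ'eval : (derivative Q).eval 0 = ((S : ℝ) : ℂ) := by
    have hdQ : derivative Q = ∑ i ∈ s, (∏ j ∈ s.erase i, (X - C ((hr j : ℝ) : ℂ)))
        * derivative (X - C ((hr i : ℝ) : ℂ)) := derivative_prod
    rw [hdQ]
    simp only [derivative_sub, derivative_X, derivative_C, sub_zero, mul_one, eval_finset_sum]
    rw [hS]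
    push_cast
    refine Finset.sum_congr rfl fun i hi => ?_
    rw [eval_prod]
    refine Finset.prod_congr rfl fun j hj => ?_
    simpa using hcast j (Finset.mem_of_mem_erase hj)
  have hpeval : ∀ j ∈ s, p.eval ((hr j : ℝ) : ℂ) = 0 := by
    intro j hj
    rw [hp]
    simp [hQeval j hj]
  have hp'eval : ∀ j ∈ s, (derivative p).eval ((hr j : ℝ) : ℂ) = 0 := by
    intro j hj
    rw [hp, derivative_mul, derivative_pow]
    simp [hQeval j hj]
  have hp'0 : (derivative p).eval 0 = 0 := by
    rw [hp, derivative_mul, derivative_pow]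
    simp only [derivative_sub, derivative_X, derivative_C, sub_zero, eval_add, eval_mul,
      eval_pow, eval_sub, eval_X, eval_C, one_mul, eval_one]
    rw [hQ0eval, hQ'eval]
    rw [hc]
    have hS0 : (S : ℂ) ≠ 0 := by exact_mod_cast ne_of_gt hSpos
    push_cast
    field_simp
    ring
  have hpeval0 : p.eval 0 = ((-(c * Q0 ^ 2) : ℝ) : ℂ) := by
    rw [hp]
    simp only [eval_mul, eval_pow, eval_sub, eval_X, eval_C, zero_sub]
    rw [hQ0eval]
    push_cast
    ring
  -- apply the key functional identity
  have key := key_functional ℓ hℓ hr A B hAB p (by omega)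
  rw [hpcoeff, one_mul] at key
  have hsum1 : ∑ j, A j * p.eval ((hr j : ℝ) : ℂ) = A i0 * ((-(c * Q0 ^ 2) : ℝ) : ℂ) := by
    rw [Finset.sum_eq_single i0]
    · rw [hri0, Complex.ofReal_zero, hpeval0]
    · intro j _ hj
      rw [hpeval j (Finset.mem_erase.mpr ⟨hj, Finset.mem_univ _⟩), mul_zero]
    · simp
  have hsum2 : ∑ j, B j * (derivative p).eval ((hr j : ℝ) : ℂ) = 0 := by
    refine Finset.sum_eq_zero fun j _ => ?_
    by_cases hj : j = i0
    · rw [hj, hri0, Complex.ofReal_zero, hp'0, mul_zero]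
    · rw [hp'eval j (Finset.mem_erase.mpr ⟨hj, Finset.mem_univ _⟩), mul_zero]
  rw [hsum1, hsum2, add_zero] at key
  -- extract |A i0|
  have hA0 : ‖A i0‖ = ((2 * ℓ - 1).factorial : ℝ) / (c * Q0 ^ 2) := by
    have := congrArg norm key
    rw [norm_mul, Complex.norm_real, Complex.norm_natCast] at this
    have habs : |(-(c * Q0 ^ 2) : ℝ)| = c * Q0 ^ 2 := by
      rw [abs_neg, abs_of_pos (by positivity)]
    rw [Real.norm_eq_abs, habs] at this
    rw [eq_div_iff (ne_of_gt (mul_pos hcpos (pow_pos hQ0pos 2)))]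
    exact this
  -- lower bound the l2 norm by the first entry
  set u : (Fin ℓ ⊕ Fin ℓ) → ℂ := Sum.elim
      (fun j : Fin ℓ => ((Δ : ℝ) : ℂ) ^ (2 * ℓ - 1) * A j)
      (fun j : Fin ℓ => ((Δ : ℝ) : ℂ) ^ (2 * ℓ - 1) *
        (2 * (Real.pi : ℂ) * Complex.I) * z j * B j) with hu
  have hfirst : ‖u (Sum.inl i0)‖ ≤ l2norm u := by
    have h1 : ‖u (Sum.inl i0)‖ ^ 2 ≤ ∑ i, ‖u i‖ ^ 2 :=
      Finset.single_le_sum (f := fun i => ‖u i‖ ^ 2) (fun i _ => by positivity)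
        (Finset.mem_univ _)
    calc ‖u (Sum.inl i0)‖ = Real.sqrt (‖u (Sum.inl i0)‖ ^ 2) :=
          (Real.sqrt_sq (norm_nonneg _)).symm
      _ ≤ l2norm u := Real.sqrt_le_sqrt h1
  have hval : ‖u (Sum.inl i0)‖ = Δ ^ (2 * ℓ - 1) * (((2 * ℓ - 1).factorial : ℝ) / (c * Q0 ^ 2)) := by
    rw [hu]
    simp only [Sum.elim_inl, norm_mul, norm_pow, Complex.norm_real]
    rw [hA0, Real.norm_eq_abs, abs_of_pos hΔ]
  -- final numeric estimate
  refine le_trans ?_ hfirst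
  rw [hval]
  set e := 2 * ℓ - 1 with he
  set T : ℝ := ∏ j ∈ s.erase i1, (t j * Δ) with hT
  have hQ0T : Q0 = (t i1 * Δ) * T := (Finset.mul_prod_erase s _ hi1s).symm
  have hST : T ≤ S := by
    refine Finset.single_le_sum (f := fun i => ∏ j ∈ s.erase i, (t j * Δ))
      (fun i hi => le_of_lt (Finset.prod_pos fun j hj => hrpos j (Finset.mem_of_mem_erase hj)))
      hi1s
  have ha : t i1 * Δ ≤ τ * Δ := mul_le_mul_of_nonneg_right (htτ i1) hΔ.le
  have hapos : 0 < t i1 * Δ := hrpos i1 hi1s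
  have hTbound : T ≤ (τ * Δ) ^ (ℓ - 2) := by
    rw [hT]
    calc ∏ j ∈ s.erase i1, (t j * Δ) ≤ ∏ j ∈ s.erase i1, (τ * Δ) := by
          refine Finset.prod_le_prod (fun j hj => (hrpos j (Finset.mem_of_mem_erase hj)).le)
            (fun j hj => mul_le_mul_of_nonneg_right (htτ j) hΔ.le)
      _ = (τ * Δ) ^ (ℓ - 2) := by
          rw [Finset.prod_const]
          congr 1
          rw [Finset.card_erase_of_mem hi1s, hs, Finset.card_erase_of_mem (Finset.mem_univ _)]
          simp only [Finset.card_univ, Fintype.card_fin]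
          omega
  have hτΔpos : 0 < τ * Δ := mul_pos (by linarith) hΔ
  have hcQ : c * Q0 ^ 2 ≤ (τ * Δ) ^ e / 2 := by
    have h1 : c * Q0 ^ 2 = Q0 ^ 3 / (2 * S) := by
      rw [hc]; field_simp
    rw [h1]
    have h2 : Q0 ^ 3 / (2 * S) ≤ Q0 ^ 3 / (2 * T) := by
      apply div_le_div_of_nonneg_left (by positivity) (by linarith) (by linarith)
    refine le_trans h2 ?_
    have h3 : Q0 ^ 3 / (2 * T) = (t i1 * Δ) ^ 3 * T ^ 2 / 2 := by
      rw [hQ0T]; field_simp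
    rw [h3]
    have h4 : (t i1 * Δ) ^ 3 * T ^ 2 ≤ (τ * Δ) ^ 3 * ((τ * Δ) ^ (ℓ - 2)) ^ 2 := by
      gcongr
    have h5 : (τ * Δ) ^ 3 * ((τ * Δ) ^ (ℓ - 2)) ^ 2 = (τ * Δ) ^ e := by
      have h6 : 3 + (ℓ - 2) * 2 = e := by omega
      rw [← pow_mul, ← pow_add, h6]
    rw [h5] at h4
    linarith
  -- conclude
  have hfact : (0:ℝ) ≤ ((2 * ℓ - 1).factorial : ℝ) := Nat.cast_nonneg _
  have hcQpos : 0 < c * Q0 ^ 2 := mul_pos hcpos (pow_pos hQ0pos 2)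
  have hτe : (0:ℝ) < τ ^ e := by positivity
  have hΔe : (0:ℝ) < Δ ^ e := by positivity
  have hstep : Δ ^ e * (((2 * ℓ - 1).factorial : ℝ) / ((τ * Δ) ^ e / 2))
      ≤ Δ ^ e * (((2 * ℓ - 1).factorial : ℝ) / (c * Q0 ^ 2)) := by
    have := div_le_div_of_nonneg_left hfact hcQpos hcQ
    exact mul_le_mul_of_nonneg_left this hΔe.le
  refine le_trans ?_ hstep
  have hrw : Δ ^ e * (((2 * ℓ - 1).factorial : ℝ) / ((τ * Δ) ^ e / 2))
      = 2 * ((2 * ℓ - 1).factorial : ℝ) / τ ^ e := by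
    rw [mul_pow]
    field_simp
  rw [hrw]
  have hℓ1 : (1:ℝ) ≤ (ℓ:ℝ) := by exact_mod_cast Nat.one_le_of_lt hℓ
  have hℓ3 : (1:ℝ) ≤ (ℓ:ℝ)^3 := one_le_pow₀ hℓ1
  exact final_num _ _ _ hfact hτe hℓ3
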